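/- Fix K ≥ 2 and ε < 1/K². Consider K² + 1 impressions and K² advertisers, each with demand 1: advertiser i (1 ≤ i ≤ K²) has value ε for impression i, advertiser 1 has value K for a special impression s, and every other advertiser has value 1 for s; all other values are 0. The maximum-weight matching has value at least K, while the equal-sharing fair allocation (where s is split equally among all K² advertisers) gives advertiser 1 value K/K² from s, so the total value of the equal-sharing allocation is at most K/K² + (K² - 1)·(1/K² + ε) + K²·ε ≤ 2 + K²ε + 1. Hence the ratio of the equal-sharing allocation's value to the optimum tends to 0 as K → ∞. -/
import Mathlib


/-- Equal-sharing fair allocations can be arbitrarily inefficient: the optimum is at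
least `K` while the equal-sharing allocation has value at most `3 + K²ε`, so the ratio
is at most `4/K`. -/
theorem stmt_9 (K : ℕ) (hK : 2 ≤ K) (ε : ℝ) (hε0 : 0 < ε) (hε : ε < 1 / (K : ℝ) ^ 2)
    (hKpos : 0 < K ^ 2)
    (w : Fin (K ^ 2) ⊕ Unit → Fin (K ^ 2) → ℝ)
    (hw1 : ∀ i j : Fin (K ^ 2), w (Sum.inl i) j = if i = j then ε else 0)
    (hw2 : ∀ j : Fin (K ^ 2), w (Sum.inr ()) j =
      if j = (⟨0, hKpos⟩ : Fin (K ^ 2)) then (K : ℝ) else 1)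
    (xf : Fin (K ^ 2) ⊕ Unit → Fin (K ^ 2) → ℝ)
    (hxf1 : ∀ i j : Fin (K ^ 2), xf (Sum.inl i) j = if i = j then 1 else 0)
    (hxf2 : ∀ j : Fin (K ^ 2), xf (Sum.inr ()) j = 1 / (K : ℝ) ^ 2) :
    (∃ x : Fin (K ^ 2) ⊕ Unit → Fin (K ^ 2) → ℝ,
      (∀ i j, 0 ≤ x i j) ∧ (∀ i, ∑ j, x i j ≤ 1) ∧ (∀ j, ∑ i, x i j ≤ 1) ∧
      (K : ℝ) ≤ ∑ i, ∑ j, w i j * x i j) ∧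
    (∑ i, ∑ j, w i j * xf i j ≤ 3 + (K : ℝ) ^ 2 * ε) ∧
    ((∑ i, ∑ j, w i j * xf i j) / K ≤ 4 / (K : ℝ)) := by
  have hK0 : (0:ℝ) < (K:ℝ) := by positivity
  have hK2 : (0:ℝ) < (K:ℝ)^2 := by positivity
  -- value of equal sharing
  have hval : (∑ i, ∑ j, w i j * xf i j)
      = (K:ℝ)^2 * ε + ((K:ℝ) + ((K:ℝ)^2 - 1)) / (K:ℝ)^2 := by
    rw [Fintype.sum_sum_type]
    have h1 : ∑ i : Fin (K^2), ∑ j, w (Sum.inl i) j * xf (Sum.inl i) j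
        = (K:ℝ)^2 * ε := by
      have : ∀ i : Fin (K^2), ∑ j, w (Sum.inl i) j * xf (Sum.inl i) j = ε := by
        intro i
        simp [hw1, hxf1, ite_and, Finset.sum_ite_eq]
      simp [this, Finset.sum_const, Finset.card_univ]
    have h2 : ∑ i : Unit, ∑ j, w (Sum.inr i) j * xf (Sum.inr i) j
        = ((K:ℝ) + ((K:ℝ)^2 - 1)) / (K:ℝ)^2 := by
      simp only [Finset.univ_unique, Finset.sum_singleton]
      have : ∑ j, w (Sum.inr PUnit.unit) j * xf (Sum.inr PUnit.unit) j
          = ∑ j : Fin (K^2), (if j = (⟨0, hKpos⟩ : Fin (K ^ 2)) then (K : ℝ) else 1) * (1/(K:ℝ)^2) := by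
        apply Finset.sum_congr rfl
        intro j _
        rw [hw2, hxf2]
      rw [this, ← Finset.sum_mul]
      have hsplit : ∀ i : Fin (K^2), (if i = (⟨0, hKpos⟩ : Fin (K^2)) then (K:ℝ) else 1)
          = (if i = (⟨0, hKpos⟩ : Fin (K^2)) then (K:ℝ) - 1 else 0) + 1 := by
        intro i; split <;> ring
      simp only [hsplit, Finset.sum_add_distrib, Finset.sum_ite_eq', Finset.mem_univ,
        if_true, Finset.sum_const, Finset.card_univ, Fintype.card_fin, nsmul_eq_mul, mul_one]
      push_cast
      field_simp
      ring
    rw [h1, h2]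
  refine ⟨⟨fun i j => if i = Sum.inr () ∧ j = (⟨0, hKpos⟩ : Fin (K^2)) then 1 else 0,
    ?_, ?_, ?_, ?_⟩, ?_, ?_⟩
  · intro i j; positivity
  · intro i
    rcases i with i | i
    · simp
    · simp [ite_and, Finset.sum_ite_eq']
  · intro j
    rw [Fintype.sum_sum_type]
    simp [ite_and]
    split <;> norm_num
  · rw [Fintype.sum_sum_type]
    have h1 : ∑ i : Fin (K^2), ∑ j, w (Sum.inl i) j *
        (if Sum.inl i = Sum.inr () ∧ j = (⟨0, hKpos⟩ : Fin (K^2)) then (1:ℝ) else 0) = 0 := by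
      simp
    have h2 : ∑ i : Unit, ∑ j, w (Sum.inr i) j *
        (if (Sum.inr i : Fin (K^2) ⊕ Unit) = Sum.inr () ∧ j = (⟨0, hKpos⟩ : Fin (K^2)) then (1:ℝ) else 0) = K := by
      simp [mul_ite, Finset.sum_ite_eq', hw2]
    rw [h1, h2]; linarith
  · rw [hval]
    have hle : ((K:ℝ) + ((K:ℝ)^2 - 1)) / (K:ℝ)^2 ≤ 3 := by
      rw [div_le_iff₀ hK2]
      nlinarith [hK2, hK0, show (2:ℝ) ≤ K from by exact_mod_cast hK]
    linarith
  · rw [hval]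
    rw [div_le_div_iff₀ hK0 hK0]
    have h1 : (K:ℝ)^2 * ε < 1 := by
      have := mul_lt_mul_of_pos_left hε hK2
      rwa [mul_one_div, div_self (ne_of_gt hK2)] at this
    have hle : ((K:ℝ) + ((K:ℝ)^2 - 1)) / (K:ℝ)^2 ≤ 3 := by
      rw [div_le_iff₀ hK2]
      nlinarith [show (2:ℝ) ≤ K from by exact_mod_cast hK]
    nlinarith
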